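/- arXiv:2001.11234 — 2 statements merged into one kernel-verified Lean document; each statement's English description precedes it below -/
import Mathlib

section
/- Let V : [t₀, ∞) → ℝ be a nonnegative, continuously differentiable function satisfying V'(t) ≤ -c √(V(t)) for some constant c > 0 whenever V(t) > 0. Then V(t) = 0 for all t ≥ t₀ + 2√(V(t₀))/c. -/
open Set

private lemma aux_zero_persist (t₀ c : ℝ) (hc : 0 < c) (V : ℝ → ℝ)
    (hVnonneg : ∀ t, t₀ ≤ t → 0 ≤ V t)
    (hVdiff : ContDiffOn ℝ 1 V (Set.Ici t₀))
    (hV' : ∀ t, t₀ ≤ t → 0 < V t → derivWithin V (Set.Ici t₀) t ≤ -c * Real.sqrt (V t))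
    {s t : ℝ} (hs : t₀ ≤ s) (hst : s ≤ t) (hVs : V s = 0) : V t = 0 := by
  by_contra h
  have hVt : 0 < V t := lt_of_le_of_ne (hVnonneg t (hs.trans hst)) (Ne.symm h)
  set A : Set ℝ := Icc s t ∩ V ⁻¹' {0} with hA
  have hAne : A.Nonempty := ⟨s, ⟨le_rfl, hst⟩, hVs⟩
  have hAbdd : BddAbove A := ⟨t, fun x hx => hx.1.2⟩
  have hVcont : ContinuousOn V (Icc s t) :=
    hVdiff.continuousOn.mono (fun x hx => hs.trans hx.1)
  have hAclosed : IsClosed A :=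
    hVcont.preimage_isClosed_of_isClosed isClosed_Icc isClosed_singleton
  set u := sSup A with hu
  have huA : u ∈ A := hAclosed.csSup_mem hAne hAbdd
  have hVu : V u = 0 := huA.2
  have hus : s ≤ u := huA.1.1
  have hut : u ≤ t := huA.1.2
  have hut' : u < t := lt_of_le_of_ne hut (fun he => h (he ▸ hVu))
  have hpos : ∀ x, u < x → x ≤ t → 0 < V x := by
    intro x hux hxt
    rcases lt_or_eq_of_le (hVnonneg x (hs.trans (hus.trans hux.le))) with h' | h'
    · exact h'
    · exact absurd (le_csSup hAbdd (show x ∈ A from ⟨⟨hus.trans hux.le, hxt⟩, h'.symm⟩))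
        (not_le.mpr hux)
  have hanti : AntitoneOn V (Icc u t) := by
    apply antitoneOn_of_deriv_nonpos (convex_Icc u t)
      (hVcont.mono (Icc_subset_Icc hus le_rfl))
    · rw [interior_Icc]
      intro x hx
      have hx0 : t₀ < x := lt_of_le_of_lt (hs.trans hus) hx.1
      exact (((hVdiff.differentiableOn one_ne_zero) x hx0.le).differentiableAt
        (Ici_mem_nhds hx0)).differentiableWithinAt
    · rw [interior_Icc]
      intro x hx
      have hx0 : t₀ < x := lt_of_le_of_lt (hs.trans hus) hx.1
      have hd := hV' x hx0.le (hpos x hx.1 hx.2.le)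
      rw [derivWithin_of_mem_nhds (Ici_mem_nhds hx0)] at hd
      have hnn : 0 ≤ c * Real.sqrt (V x) := mul_nonneg hc.le (Real.sqrt_nonneg _)
      linarith
  have hle : V t ≤ V u := hanti ⟨le_rfl, hut⟩ ⟨hut, le_rfl⟩ hut
  rw [hVu] at hle
  linarith

/-- If V : [t₀,∞) → ℝ is nonnegative and continuously differentiable with
V'(t) ≤ -c √(V(t)) (c > 0) whenever V(t) > 0, then V(t) = 0 for all
t ≥ t₀ + 2√(V(t₀))/c. -/
theorem stmt14 (t₀ c : ℝ) (hc : 0 < c) (V : ℝ → ℝ)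
    (hVnonneg : ∀ t, t₀ ≤ t → 0 ≤ V t)
    (hVdiff : ContDiffOn ℝ 1 V (Set.Ici t₀))
    (hV' : ∀ t, t₀ ≤ t → 0 < V t → derivWithin V (Set.Ici t₀) t ≤ -c * Real.sqrt (V t)) :
    ∀ t, t₀ + 2 * Real.sqrt (V t₀) / c ≤ t → V t = 0 := by
  set T : ℝ := t₀ + 2 * Real.sqrt (V t₀) / c with hT
  have hT0 : t₀ ≤ T := by
    have : 0 ≤ 2 * Real.sqrt (V t₀) / c :=
      div_nonneg (by positivity) hc.le
    rw [hT]; linarith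
  have key : V T = 0 := by
    by_cases hzero : ∃ s ∈ Icc t₀ T, V s = 0
    · obtain ⟨s, hs, hVs⟩ := hzero
      exact aux_zero_persist t₀ c hc V hVnonneg hVdiff hV' hs.1 hs.2 hVs
    · push_neg at hzero
      exfalso
      have hposI : ∀ x ∈ Icc t₀ T, 0 < V x := fun x hx =>
        lt_of_le_of_ne (hVnonneg x hx.1) (Ne.symm (hzero x hx))
      set g : ℝ → ℝ := fun r => Real.sqrt (V r) + c / 2 * r with hg
      have hVcont : ContinuousOn V (Icc t₀ T) :=
        hVdiff.continuousOn.mono (fun x hx => hx.1)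
      have hgderiv : ∀ x ∈ Ioo t₀ T, HasDerivAt g
          (1 / (2 * Real.sqrt (V x)) * deriv V x + c / 2) x := by
        intro x hx
        have hVx : 0 < V x := hposI x ⟨hx.1.le, hx.2.le⟩
        have hdiff : DifferentiableAt ℝ V x :=
          ((hVdiff.differentiableOn one_ne_zero) x hx.1.le).differentiableAt
            (Ici_mem_nhds hx.1)
        have hsq : HasDerivAt Real.sqrt (1 / (2 * Real.sqrt (V x))) (V x) :=
          Real.hasDerivAt_sqrt hVx.ne'
        have hcomp : HasDerivAt (fun r => Real.sqrt (V r))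
            (1 / (2 * Real.sqrt (V x)) * deriv V x) x :=
          hsq.comp x hdiff.hasDerivAt
        have hlin : HasDerivAt (fun r : ℝ => c / 2 * r) (c / 2) x := by
          simpa using (hasDerivAt_id x).const_mul (c / 2)
        exact hcomp.add hlin
      have hanti : AntitoneOn g (Icc t₀ T) := by
        apply antitoneOn_of_deriv_nonpos (convex_Icc t₀ T)
        · exact (Real.continuous_sqrt.comp_continuousOn hVcont).add
            (continuousOn_const.mul continuousOn_id)
        · rw [interior_Icc]
          exact fun x hx => (hgderiv x hx).differentiableAt.differentiableWithinAt
        · rw [interior_Icc]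
          intro x hx
          have hVx : 0 < V x := hposI x ⟨hx.1.le, hx.2.le⟩
          have hsx : 0 < Real.sqrt (V x) := Real.sqrt_pos.mpr hVx
          have hd := hV' x hx.1.le hVx
          rw [derivWithin_of_mem_nhds (Ici_mem_nhds hx.1)] at hd
          rw [(hgderiv x hx).deriv]
          have h1 : 1 / (2 * Real.sqrt (V x)) * deriv V x ≤
              1 / (2 * Real.sqrt (V x)) * (-c * Real.sqrt (V x)) := by
            apply mul_le_mul_of_nonneg_left hd
            positivity
          have h2 : 1 / (2 * Real.sqrt (V x)) * (-c * Real.sqrt (V x)) = -(c / 2) := by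
            field_simp
          linarith
      have hle : g T ≤ g t₀ := hanti ⟨le_rfl, hT0⟩ ⟨hT0, le_rfl⟩ hT0
      have hTt : c / 2 * T = c / 2 * t₀ + Real.sqrt (V t₀) := by
        rw [hT]; field_simp
      have hsqT : Real.sqrt (V T) ≤ 0 := by
        simp only [hg] at hle
        linarith
      have hVT : 0 < V T := hposI T ⟨hT0, le_rfl⟩
      have : 0 < Real.sqrt (V T) := Real.sqrt_pos.mpr hVT
      linarith
  intro t ht
  exact aux_zero_persist t₀ c hc V hVnonneg hVdiff hV' hT0 ht key
end

section
/- Let L be the Laplacian of a connected undirected graph on n vertices and x̃ : [t₀,∞) → ℝⁿ an absolutely continuous trajectory with 𝟏ₙᵀx̃(t) = 0 for all t, satisfying (d/dt)(½‖x̃(t)‖²) ≤ -√(2 x̃(t)ᵀ L x̃(t)) for almost every t. Then x̃(t) = 0 for all t ≥ t₀ + ‖x̃(t₀)‖₂ / √(λ₂(L)). -/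
open Matrix MeasureTheory
open scoped RealInnerProductSpace
set_option maxHeartbeats 1000000

/-- The second-smallest eigenvalue (algebraic connectivity) of the Laplacian of a connected
graph: the smallest nonzero eigenvalue. -/
noncomputable def lambda2 {n : ℕ} {A : Matrix (Fin n) (Fin n) ℝ} (hA : A.IsHermitian) : ℝ :=
  sInf {μ : ℝ | μ ≠ 0 ∧ ∃ i, hA.eigenvalues i = μ}

lemma lambda2_le {n : ℕ} {A : Matrix (Fin n) (Fin n) ℝ} (hA : A.IsHermitian)
    {i : Fin n} (hi : hA.eigenvalues i ≠ 0) : lambda2 hA ≤ hA.eigenvalues i := by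
  apply csInf_le
  · exact Set.Finite.bddBelow <| Set.Finite.subset (Set.finite_range hA.eigenvalues)
      (fun μ hμ => hμ.2)
  · exact ⟨hi, i, rfl⟩

lemma exists_adj_of_connected {n : ℕ} (G : SimpleGraph (Fin n)) (hG : G.Connected)
    (hn : 2 ≤ n) : ∃ v w, G.Adj v w := by
  have h0 : (0:ℕ) < n := by omega
  have h1 : (1:ℕ) < n := by omega
  have hne : (⟨0, h0⟩ : Fin n) ≠ ⟨1, h1⟩ := by simp [Fin.ext_iff]
  obtain ⟨p⟩ := hG.preconnected ⟨0, h0⟩ ⟨1, h1⟩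
  exact ⟨_, _, p.adj_snd (SimpleGraph.Walk.not_nil_of_ne hne)⟩

lemma lambda2_pos {n : ℕ} (G : SimpleGraph (Fin n)) [DecidableRel G.Adj] (hG : G.Connected)
    (hL : (G.lapMatrix ℝ).IsHermitian) (hn : 2 ≤ n) : 0 < lambda2 hL := by
  have hPSD := SimpleGraph.posSemidef_lapMatrix ℝ G
  have hnonneg : ∀ i, 0 ≤ hL.eigenvalues i := fun i => hPSD.eigenvalues_nonneg i
  have hSfin : Set.Finite {μ : ℝ | μ ≠ 0 ∧ ∃ i, hL.eigenvalues i = μ} :=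
    Set.Finite.subset (Set.finite_range hL.eigenvalues) (fun μ hμ => hμ.2)
  have hSne : Set.Nonempty {μ : ℝ | μ ≠ 0 ∧ ∃ i, hL.eigenvalues i = μ} := by
    by_contra h
    rw [Set.not_nonempty_iff_eq_empty] at h
    have hall : ∀ i, hL.eigenvalues i = 0 := by
      intro i
      by_contra hi
      have : hL.eigenvalues i ∈ {μ : ℝ | μ ≠ 0 ∧ ∃ j, hL.eigenvalues j = μ} := ⟨hi, i, rfl⟩
      rw [h] at this
      exact Set.notMem_empty _ this
    have hLzero : G.lapMatrix ℝ = 0 := by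
      have hst := hL.spectral_theorem
      have : diagonal (RCLike.ofReal ∘ hL.eigenvalues) = (0 : Matrix (Fin n) (Fin n) ℝ) := by
        ext i j
        by_cases hij : i = j <;> simp [diagonal, hij, hall]
      rw [this, map_zero] at hst
      exact hst
    obtain ⟨v, w, hvw⟩ := exists_adj_of_connected G hG hn
    have : G.lapMatrix ℝ v w = 0 := by rw [hLzero]; rfl
    have hne := hvw.ne
    simp [SimpleGraph.lapMatrix, SimpleGraph.degMatrix, hne, hvw] at this
  have hmem := hSne.csInf_mem hSfin
  obtain ⟨hne0, i, hi⟩ := hmem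
  have := hnonneg i
  rw [hi] at this
  exact lt_of_le_of_ne this (Ne.symm hne0)

lemma quad_ge {n : ℕ} (G : SimpleGraph (Fin n)) [DecidableRel G.Adj] (hG : G.Connected)
    (hL : (G.lapMatrix ℝ).IsHermitian) (hn : 2 ≤ n) (x : Fin n → ℝ) (hx : ∑ i, x i = 0) :
    lambda2 hL * (∑ i, (x i)^2) ≤ x ⬝ᵥ (G.lapMatrix ℝ *ᵥ x) := by
  have h0 : (0:ℕ) < n := by omega
  set B := hL.eigenvectorBasis with hB
  let y : EuclideanSpace ℝ (Fin n) := WithLp.toLp 2 x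
  set c : Fin n → ℝ := fun i => ⟪(B i : EuclideanSpace ℝ (Fin n)), y⟫ with hc
  have hinner : ∀ (u v : EuclideanSpace ℝ (Fin n)), ⟪u, v⟫ = ∑ j, u j * v j := by
    intro u v; simp [PiLp.inner_apply, RCLike.inner_apply, conj_trivial]
    exact Finset.sum_congr rfl fun _ _ => mul_comm _ _
  -- sum of squares
  have hsumsq : (∑ j, (x j)^2) = ∑ i, (c i)^2 := by
    have key := B.sum_inner_mul_inner y y
    have h1 : ∀ i, ⟪y, B i⟫ = c i := fun i => real_inner_comm _ _
    calc (∑ j, (x j)^2) = ⟪y, y⟫ := by rw [hinner]; exact Finset.sum_congr rfl (fun j _ => (sq (x j)).symm ▸ rfl)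
    _ = ∑ i, ⟪y, B i⟫ * ⟪B i, y⟫ := key.symm
    _ = ∑ i, (c i)^2 := by
        refine Finset.sum_congr rfl (fun i _ => ?_)
        rw [h1 i]; ring
  -- quad form
  let z : EuclideanSpace ℝ (Fin n) := WithLp.toLp 2 (G.lapMatrix ℝ *ᵥ x)
  have hsym : ∀ v : Fin n → ℝ, v ⬝ᵥ (G.lapMatrix ℝ *ᵥ x) = (G.lapMatrix ℝ *ᵥ v) ⬝ᵥ x := by
    intro v
    rw [dotProduct_mulVec, ← mulVec_transpose, (SimpleGraph.isSymm_lapMatrix ℝ G).eq]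
  have hBz : ∀ i, ⟪(B i : EuclideanSpace ℝ (Fin n)), z⟫ = hL.eigenvalues i * c i := by
    intro i
    rw [hinner]
    have : (∑ j, (B i : EuclideanSpace ℝ (Fin n)) j * z j)
        = ⇑(B i) ⬝ᵥ (G.lapMatrix ℝ *ᵥ x) := rfl
    rw [this, hsym, hL.mulVec_eigenvectorBasis, smul_dotProduct]
    have : (⇑(B i) ⬝ᵥ x) = c i := by simp only [hc]; rw [hinner]; rfl
    rw [this]; rfl
  have hquad : x ⬝ᵥ (G.lapMatrix ℝ *ᵥ x) = ∑ i, hL.eigenvalues i * (c i)^2 := by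
    have key := B.sum_inner_mul_inner y z
    have h1 : ∀ i, ⟪y, B i⟫ = c i := fun i => real_inner_comm _ _
    have h2 : ⟪y, z⟫ = x ⬝ᵥ (G.lapMatrix ℝ *ᵥ x) := by rw [hinner]; rfl
    rw [← h2, ← key]
    refine Finset.sum_congr rfl (fun i _ => ?_)
    rw [h1 i, hBz i]; ring
  -- kernel coefficients vanish
  have hker : ∀ i, hL.eigenvalues i = 0 → c i = 0 := by
    intro i hi
    have hmv : G.lapMatrix ℝ *ᵥ ⇑(B i) = 0 := by
      rw [hL.mulVec_eigenvectorBasis, hi, zero_smul]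
    have hlin : Matrix.toLin' (G.lapMatrix ℝ) ⇑(B i) = 0 := by
      rw [Matrix.toLin'_apply]; exact hmv
    have hconst := (G.lapMatrix_mulVec_eq_zero_iff_forall_reachable).mp hmv
    have hc0 : ∀ j, (B i : EuclideanSpace ℝ (Fin n)) j = (B i : EuclideanSpace ℝ (Fin n)) ⟨0, h0⟩ :=
      fun j => hconst j ⟨0, h0⟩ (hG.preconnected j ⟨0, h0⟩)
    simp only [hc]
    rw [hinner]
    calc (∑ j, (B i : EuclideanSpace ℝ (Fin n)) j * y j)
        = ∑ j, (B i : EuclideanSpace ℝ (Fin n)) ⟨0, h0⟩ * x j :=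
          Finset.sum_congr rfl (fun j _ => by rw [hc0 j])
    _ = (B i : EuclideanSpace ℝ (Fin n)) ⟨0, h0⟩ * ∑ j, x j := by rw [Finset.mul_sum]
    _ = 0 := by rw [hx, mul_zero]
  -- conclude
  rw [hquad, hsumsq, Finset.mul_sum]
  refine Finset.sum_le_sum (fun i _ => ?_)
  by_cases hi : hL.eigenvalues i = 0
  · rw [hker i hi, hi]; simp
  · exact mul_le_mul_of_nonneg_right (lambda2_le hL hi) (sq_nonneg _)

lemma finite_time_zero (t₀ : ℝ) (V v' : ℝ → ℝ) (c : ℝ) (hc : 0 < c)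
    (hV0 : ∀ t, t₀ ≤ t → 0 ≤ V t)
    (hint : ∀ a b : ℝ, IntervalIntegrable v' volume a b)
    (hFTC : ∀ a b : ℝ, t₀ ≤ a → a ≤ b → V b - V a = ∫ t in a..b, v' t)
    (hb : ∀ᵐ t ∂volume, t₀ ≤ t → v' t ≤ -(2*c*Real.sqrt (V t))) :
    ∀ T, t₀ + Real.sqrt (2 * V t₀) / c ≤ T → V T = 0 := by
  have mono : ∀ a b, t₀ ≤ a → a ≤ b → V b ≤ V a := by
    intro a b ha hab
    have h := hFTC a b ha hab
    have hle : ∫ t in a..b, v' t ≤ ∫ _t in a..b, (0:ℝ) := by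
      apply intervalIntegral.integral_mono_ae_restrict hab (hint a b)
        intervalIntegrable_const
      filter_upwards [ae_restrict_of_ae hb, ae_restrict_mem measurableSet_Icc] with t h1 h2
      have ht0 : t₀ ≤ t := le_trans ha h2.1
      have h3 := h1 ht0
      nlinarith [Real.sqrt_nonneg (V t)]
    simp only [intervalIntegral.integral_zero] at hle
    linarith [h ▸ hle]
  have key : ∀ a b, t₀ ≤ a → a ≤ b → b ≤ t₀ + Real.sqrt (2 * V t₀) / c →
      V b - V a ≤ -(2*c*Real.sqrt (V b))*(b-a) := by
    intro a b ha hab _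
    rw [hFTC a b ha hab]
    have hle : ∫ t in a..b, v' t ≤ ∫ _t in a..b, (-(2*c*Real.sqrt (V b))) := by
      apply intervalIntegral.integral_mono_ae_restrict hab (hint a b)
        intervalIntegrable_const
      filter_upwards [ae_restrict_of_ae hb, ae_restrict_mem measurableSet_Icc] with t h1 h2
      have ht0 : t₀ ≤ t := le_trans ha h2.1
      have h3 := h1 ht0
      have h4 : Real.sqrt (V b) ≤ Real.sqrt (V t) := Real.sqrt_le_sqrt (mono t b ht0 h2.2)
      nlinarith
    rw [intervalIntegral.integral_const, smul_eq_mul] at hle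
    linarith
  intro T hT
  set D := Real.sqrt (2 * V t₀) / c with hD
  have hD0 : 0 ≤ D := div_nonneg (Real.sqrt_nonneg _) hc.le
  set T' : ℝ := t₀ + D with hT'd
  have hT'0 : t₀ ≤ T' := by simp only [hT'd]; linarith
  suffices hVT' : V T' = 0 by
    have h1 := mono T' T hT'0 hT
    have h2 := hV0 T (le_trans hT'0 hT)
    linarith [hVT' ▸ h1]
  by_contra hne
  have hε : 0 < V T' := lt_of_le_of_ne (hV0 T' hT'0) (Ne.symm hne)
  set s := Real.sqrt (V T') with hs
  have hs0 : 0 < s := Real.sqrt_pos.mpr hε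
  have hVmono : V T' ≤ V t₀ := mono t₀ T' le_rfl hT'0
  have hV₀pos : 0 < V t₀ := lt_of_lt_of_le hε hVmono
  set w₀ := Real.sqrt (V t₀) with hw₀
  have hw₀pos : 0 < w₀ := Real.sqrt_pos.mpr hV₀pos
  have hsqrt2 : (1:ℝ) < Real.sqrt 2 := by
    nlinarith [Real.sq_sqrt (by norm_num : (0:ℝ) ≤ 2), Real.sqrt_nonneg 2]
  have hDpos : 0 < D := by
    rw [hD]
    apply div_pos _ hc
    apply Real.sqrt_pos.mpr; linarith
  have hden : 0 < 2*s*((Real.sqrt 2 - 1) * w₀) :=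
    mul_pos (mul_pos (by norm_num) hs0) (mul_pos (by linarith) hw₀pos)
  have hMpos : 0 < c^2 * D^2 / (2*s*((Real.sqrt 2 - 1) * w₀)) := div_pos (by positivity) hden
  obtain ⟨n, hn⟩ := exists_nat_gt (c^2 * D^2 / (2*s*((Real.sqrt 2 - 1) * w₀)))
  have hnpos : 0 < (n:ℝ) := lt_trans hMpos hn
  set h : ℝ := D / n with hh
  have hh0 : 0 ≤ h := div_nonneg hD0 hnpos.le
  have hnh : (n:ℝ) * h = D := by
    rw [hh]; field_simp
  have ind : ∀ i : ℕ, i ≤ n →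
      Real.sqrt (V (t₀ + i*h)) ≤ w₀ - i*(c*h) + i*(c^2*h^2/(2*s)) := by
    intro i
    induction i with
    | zero => intro _; simp [hw₀]
    | succ i ih =>
      intro hin
      have hin' : i ≤ n := by omega
      have IH := ih hin'
      set a : ℝ := t₀ + i*h with ha'
      set b : ℝ := t₀ + (i+1:ℕ)*h with hb'
      have ha : t₀ ≤ a := by
        rw [ha']; nlinarith [Nat.cast_nonneg (α := ℝ) i]
      have hab : a ≤ b := by
        rw [ha', hb']; push_cast; nlinarith
      have hbT' : b ≤ T' := by
        rw [hb', hT'd, ← hnh]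
        have : ((i+1:ℕ):ℝ) ≤ (n:ℝ) := by exact_mod_cast hin
        nlinarith
      have hk := key a b ha hab hbT'
      have hVb := hV0 b (le_trans ha hab)
      have hVa := hV0 a ha
      set u := Real.sqrt (V b) with hu
      set w := Real.sqrt (V a) with hw
      have hu2 : u^2 = V b := Real.sq_sqrt hVb
      have hw2 : w^2 = V a := Real.sq_sqrt hVa
      have hsu : s ≤ u := Real.sqrt_le_sqrt (mono b T' (le_trans ha hab) hbT')
      have huw : u ≤ w := Real.sqrt_le_sqrt (mono a b ha hab)
      have hba : b - a = h := by rw [ha', hb']; push_cast; ring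
      rw [hba] at hk
      -- hk : V b - V a ≤ -(2*c*u)*h
      have hstep : u ≤ w - c*h + c^2*h^2/(2*s) := by
        rcases le_or_gt (u + c*h) w with hcase | hcase
        · have hpos : 0 ≤ c^2*h^2/(2*s) := by positivity
          linarith
        · have key2 : (u + c*h - w) * (u + c*h + w) ≤ c^2*h^2 := by nlinarith
          have h2s : 2*s ≤ u + c*h + w := by nlinarith
          have hdiff : 0 < u + c*h - w := by linarith
          have : (u + c*h - w) * (2*s) ≤ c^2*h^2 :=
            le_trans (mul_le_mul_of_nonneg_left h2s hdiff.le) key2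
          have := (le_div_iff₀ (by positivity : (0:ℝ) < 2*s)).mpr this
          linarith
      calc Real.sqrt (V b) = u := rfl
      _ ≤ (w₀ - i*(c*h) + i*(c^2*h^2/(2*s))) - c*h + c^2*h^2/(2*s) := by linarith
      _ = w₀ - (i+1:ℕ)*(c*h) + (i+1:ℕ)*(c^2*h^2/(2*s)) := by push_cast; ring
  have hfin := ind n le_rfl
  rw [hnh] at hfin
  -- hfin : √(V (t₀ + D)) ≤ w₀ - n*(c*h) + n*(c²h²/(2s))
  have hcD : c * D = Real.sqrt 2 * w₀ := by
    rw [hD, hw₀]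
    rw [← Real.sqrt_mul (by norm_num : (0:ℝ) ≤ 2)]
    field_simp
  have hnch : (n:ℝ)*(c*h) = c*D := by rw [← hnh]; ring
  have hnd : (n:ℝ)*(c^2*h^2/(2*s)) = c^2*D^2/(2*s*n) := by
    rw [hh]; field_simp
  have hlast : c^2*D^2/(2*s*n) < (Real.sqrt 2 - 1) * w₀ := by
    rw [div_lt_iff₀ (by positivity : (0:ℝ) < 2*s*(n:ℝ))]
    have := (div_lt_iff₀ (by positivity : (0:ℝ) < 2*s*((Real.sqrt 2 - 1) * w₀))).mp hn
    nlinarith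
  have hsT' : Real.sqrt (V T') = s := rfl
  rw [hT'd] at hsT'
  rw [hsT', hnch, hnd, hcD] at hfin
  nlinarith

/-- Let L be the Laplacian of a connected graph and x̃ an absolutely continuous
trajectory (encoded via the fundamental theorem of calculus with an integrable derivative v'
of V = ½‖x̃‖²) with 𝟏ᵀx̃(t) = 0 for all t ≥ t₀ and V'(t) ≤ -√(2 x̃ᵀ L x̃) for a.e. t ≥ t₀.
Then x̃(t) = 0 for all t ≥ t₀ + ‖x̃(t₀)‖₂/√(λ₂(L)). -/
theorem stmt16 (n : ℕ) (G : SimpleGraph (Fin n)) [DecidableRel G.Adj] (hG : G.Connected)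
    (hL : (G.lapMatrix ℝ).IsHermitian)
    (t₀ : ℝ) (xt : ℝ → Fin n → ℝ) (v' : ℝ → ℝ)
    (hsum : ∀ t, t₀ ≤ t → ∑ i, xt t i = 0)
    (hint : ∀ a b : ℝ, IntervalIntegrable v' volume a b)
    (hFTC : ∀ a b : ℝ, t₀ ≤ a → a ≤ b →
      ((1:ℝ)/2) * ∑ i, (xt b i)^2 - ((1:ℝ)/2) * ∑ i, (xt a i)^2 = ∫ t in a..b, v' t)
    (hbound : ∀ᵐ t ∂volume, t₀ ≤ t →
      v' t ≤ -Real.sqrt (2 * (xt t ⬝ᵥ (G.lapMatrix ℝ *ᵥ xt t)))) :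
    ∀ t, t₀ + Real.sqrt (∑ i, (xt t₀ i)^2) / Real.sqrt (lambda2 hL) ≤ t → xt t = 0 := by
  intro t ht
  have ht0 : t₀ ≤ t := by
    have : 0 ≤ Real.sqrt (∑ i, (xt t₀ i)^2) / Real.sqrt (lambda2 hL) :=
      div_nonneg (Real.sqrt_nonneg _) (Real.sqrt_nonneg _)
    linarith
  by_cases hn : n < 2
  · -- small cases: n = 0 or n = 1
    funext i
    interval_cases n
    · exact i.elim0
    · have := hsum t ht0
      rw [Fin.sum_univ_one] at this
      rw [Subsingleton.elim i 0]
      exact this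
  push_neg at hn
  set c : ℝ := Real.sqrt (lambda2 hL) with hcdef
  have hlam : 0 < lambda2 hL := lambda2_pos G hG hL hn
  have hc : 0 < c := Real.sqrt_pos.mpr hlam
  set V : ℝ → ℝ := fun t => ((1:ℝ)/2) * ∑ i, (xt t i)^2 with hV
  have hV0 : ∀ u, t₀ ≤ u → 0 ≤ V u := by
    intro u _
    have : 0 ≤ ∑ i, (xt u i)^2 := Finset.sum_nonneg (fun i _ => sq_nonneg _)
    simp only [hV]; linarith
  have hb : ∀ᵐ u ∂volume, t₀ ≤ u → v' u ≤ -(2*c*Real.sqrt (V u)) := by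
    filter_upwards [hbound] with u h1
    intro hu
    refine le_trans (h1 hu) (neg_le_neg ?_)
    have hVnn : 0 ≤ V u := hV0 u hu
    have hq := quad_ge G hG hL hn (xt u) (hsum u hu)
    have hxLx : (0:ℝ) ≤ xt u ⬝ᵥ (G.lapMatrix ℝ *ᵥ xt u) := le_trans (by positivity) hq
    rw [Real.le_sqrt (by positivity)]
    swap
    · linarith
    have h2 : (2*c*Real.sqrt (V u))^2 = 4 * (lambda2 hL) * V u := by
      rw [mul_pow, mul_pow, Real.sq_sqrt hVnn, hcdef, Real.sq_sqrt hlam.le]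
      ring
    rw [h2]
    have hsum2 : (∑ i, (xt u i)^2) = 2 * V u := by simp only [hV]; ring
    rw [hsum2] at hq
    linarith
  have hzero := finite_time_zero t₀ V v' c hc hV0 hint
    (fun a b ha hab => hFTC a b ha hab) hb t
  have hthr : Real.sqrt (2 * V t₀) = Real.sqrt (∑ i, (xt t₀ i)^2) := by
    congr 1
    simp only [hV]; ring
  rw [hthr] at hzero
  have hVt := hzero ht
  funext i
  have hsum0 : ∑ j, (xt t j)^2 = 0 := by
    have : ((1:ℝ)/2) * ∑ j, (xt t j)^2 = 0 := hVt
    linarith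
  have := (Finset.sum_eq_zero_iff_of_nonneg (fun j _ => sq_nonneg (xt t j))).mp hsum0 i
    (Finset.mem_univ i)
  exact pow_eq_zero_iff (by norm_num) |>.mp this
end
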